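/- Let X ⊆ ℝⁿ be compact, f : X × U × N → X Borel measurable, π : X → U Borel measurable, d a probability distribution on N, X_s ⊆ X Borel measurable, V : X → ℝ nonnegative and continuous, and ε > 0 such that for every x ∈ X \ X_s, E_{ω∼d}[V(f(x, π(x), ω))] ≤ V(x) − ε. Fix x₀ ∈ X and let x_{t+1}(ω) = f(x_t(ω), π(x_t(ω)), ω_t) for ω ∈ N^ℕ. Then for every t ≥ 1, the probability (under d^ℕ) that the trajectory has not reached X_s by time t is at most V(x₀)/(ε·t): P_{d^ℕ}[x_s ∉ X_s for all s ≤ t] ≤ V(x₀)/(ε·t). -/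

import Mathlib

open MeasureTheory Filter
open ENNReal

/-- ℝⁿ equipped with the ℓ¹ norm. -/
abbrev L1 (n : ℕ) := PiLp 1 fun _ : Fin n => ℝ

instance (n : ℕ) : MeasurableSpace (L1 n) := MeasurableSpace.comap WithLp.ofLp MeasurableSpace.pi
instance (n : ℕ) : BorelSpace (L1 n) := PiLp.borelSpace 1

/-- Trajectory of the closed-loop system `x_{t+1} = f(x_t, π(x_t), ω_t)`. -/
def traj {X U N : Type*} (f : X → U → N → X) (π : X → U)
    (x₀ : X) (ω : ℕ → N) : ℕ → X
  | 0 => x₀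
  | t + 1 => f (traj f π x₀ ω t) (π (traj f π x₀ ω t)) (ω t)

open ENNReal in
/-- The pushforward of the infinite product measure under restriction to the
first `k` coordinates is the finite product measure. -/
lemma rsm_map_restrict_pi {N : Type*} [MeasurableSpace N]
    (d : Measure N) [IsProbabilityMeasure d]
    (μ : Measure (ℕ → N)) [IsProbabilityMeasure μ]
    (hμ : ∀ (s : Finset ℕ) (B : ℕ → Set N), (∀ i, MeasurableSet (B i)) →
      μ {ω | ∀ i ∈ s, ω i ∈ B i} = ∏ i ∈ s, d (B i)) (k : ℕ) :
    μ.map (fun ω : ℕ → N => fun i : Fin k => ω i)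
      = Measure.pi (fun _ : Fin k => d) := by
  classical
  have hr : Measurable (fun ω : ℕ → N => fun i : Fin k => ω i) :=
    measurable_pi_lambda _ fun i => measurable_pi_apply _
  refine (Measure.pi_eq fun s hs => ?_).symm
  rw [Measure.map_apply hr (MeasurableSet.univ_pi hs)]
  set B : ℕ → Set N := fun i => if h : i < k then s ⟨i, h⟩ else Set.univ with hB
  have hBmeas : ∀ i, MeasurableSet (B i) := by
    intro i
    by_cases h : i < k
    · simp only [hB, dif_pos h]; exact hs _
    · simp only [hB, dif_neg h]; exact MeasurableSet.univ
  have hset : (fun ω : ℕ → N => fun i : Fin k => ω i) ⁻¹' Set.pi Set.univ s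
      = {ω | ∀ i ∈ Finset.range k, ω i ∈ B i} := by
    ext ω
    simp only [Set.mem_preimage, Set.mem_pi, Set.mem_univ, forall_true_left,
      Set.mem_setOf_eq, Finset.mem_range]
    constructor
    · intro h i hi
      simp only [hB, dif_pos hi]
      exact h ⟨i, hi⟩
    · intro h i
      have := h i i.isLt
      simpa only [hB, dif_pos i.isLt] using this
  rw [hset, hμ _ _ hBmeas, ← Fin.prod_univ_eq_prod_range (fun i => d (B i)) k]
  refine Finset.prod_congr rfl fun i _ => ?_
  simp only [hB, i.isLt, dif_pos]

open ENNReal in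
/-- Key factorization: for a set and a function depending only on the first `t`
coordinates, the `t`-th coordinate integrates out as an independent `d`-integral. -/
lemma rsm_key_fact {N : Type*} [MeasurableSpace N] {X : Type*} [MeasurableSpace X]
    (d : Measure N) [IsProbabilityMeasure d]
    (μ : Measure (ℕ → N)) [IsProbabilityMeasure μ]
    (hμ : ∀ (s : Finset ℕ) (B : ℕ → Set N), (∀ i, MeasurableSet (B i)) →
      μ {ω | ∀ i ∈ s, ω i ∈ B i} = ∏ i ∈ s, d (B i))
    (t : ℕ)
    (g : (Fin t → N) → X) (hg : Measurable g)
    (S : Set (Fin t → N)) (hS : MeasurableSet S)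
    (F : X → N → ℝ≥0∞) (hF : Measurable fun q : X × N => F q.1 q.2) :
    ∫⁻ ω in (fun ω : ℕ → N => fun i : Fin t => ω i) ⁻¹' S,
        F (g fun i : Fin t => ω i) (ω t) ∂μ
      = ∫⁻ ω in (fun ω : ℕ → N => fun i : Fin t => ω i) ⁻¹' S,
          ∫⁻ ν, F (g fun i : Fin t => ω i) ν ∂d ∂μ := by
  classical
  set r : (ℕ → N) → (Fin t → N) := fun ω i => ω i with hrdef
  have hr : Measurable r := measurable_pi_lambda _ fun i => measurable_pi_apply _
  have hr1 : Measurable (fun ω : ℕ → N => fun i : Fin (t + 1) => ω i) :=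
    measurable_pi_lambda _ fun i => measurable_pi_apply _
  set π : Measure (Fin t → N) := Measure.pi (fun _ : Fin t => d) with hπdef
  -- the joint law of (ω t, first t coordinates) is the product measure
  set pairmap : (ℕ → N) → N × (Fin t → N) := fun ω => (ω t, r ω) with hpairdef
  have hpairmeas : Measurable pairmap := (measurable_pi_apply t).prodMk hr
  have hmap : μ.map pairmap = d.prod π := by
    set e := MeasurableEquiv.piFinSuccAbove (fun _ : Fin (t + 1) => N) (Fin.last t) with hedef
    have hcomp : pairmap = ⇑e ∘ (fun ω : ℕ → N => fun i : Fin (t + 1) => ω i) := by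
      funext ω
      have he : e (fun i : Fin (t + 1) => ω i)
          = (ω t, fun j : Fin t => ω j) := by
        simp only [hedef, MeasurableEquiv.piFinSuccAbove_apply, Fin.insertNthEquiv,
          Equiv.coe_fn_symm_mk, Fin.val_last]
        exact congrArg (Prod.mk (ω t))
          (funext fun j => by simp [Fin.removeNth, Fin.succAbove_last])
      simp [hpairdef, hrdef, he]
    have hpre := measurePreserving_piFinSuccAbove (fun _ : Fin (t + 1) => d) (Fin.last t)
    rw [hcomp, ← Measure.map_map e.measurable hr1,
      rsm_map_restrict_pi d μ hμ (t + 1), hpre.map_eq]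
  have hμr : μ.map r = π := rsm_map_restrict_pi d μ hμ t
  -- the two sides as integrals over the product measure
  have hGmeas : Measurable fun z : Fin t → N => ∫⁻ ν, F (g z) ν ∂d := by
    have : Measurable fun q : (Fin t → N) × N => F (g q.1) q.2 :=
      hF.comp ((hg.comp measurable_fst).prodMk measurable_snd)
    exact this.lintegral_prod_right'
  have hRHS : ∫⁻ ω in r ⁻¹' S, (∫⁻ ν, F (g (r ω)) ν ∂d) ∂μ
      = ∫⁻ z in S, (∫⁻ ν, F (g z) ν ∂d) ∂π := by
    rw [← hμr, setLIntegral_map hS hGmeas hr]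
  set H : N × (Fin t → N) → ℝ≥0∞ :=
    fun q => S.indicator (fun _ => (1 : ℝ≥0∞)) q.2 * F (g q.2) q.1 with hHdef
  have hHmeas : Measurable H :=
    ((measurable_const.indicator hS).comp measurable_snd).mul
      (hF.comp ((hg.comp measurable_snd).prodMk measurable_fst))
  have hLHS : ∫⁻ ω in r ⁻¹' S, F (g (r ω)) (ω t) ∂μ
      = ∫⁻ z in S, (∫⁻ ν, F (g z) ν ∂d) ∂π := by
    have h1 : ∫⁻ ω in r ⁻¹' S, F (g (r ω)) (ω t) ∂μ
        = ∫⁻ ω, H (pairmap ω) ∂μ := by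
      rw [← lintegral_indicator (hr hS)]
      refine lintegral_congr fun ω => ?_
      by_cases h : r ω ∈ S
      · simp [hHdef, hpairdef, Set.indicator_of_mem, h]
      · simp [hHdef, hpairdef, Set.indicator_of_notMem, h]
    have h2 : ∫⁻ ω, H (pairmap ω) ∂μ = ∫⁻ q, H q ∂(d.prod π) := by
      rw [← hmap, lintegral_map hHmeas hpairmeas]
    rw [h1, h2, lintegral_prod_symm H hHmeas.aemeasurable]
    have h3 : ∀ z : Fin t → N, (∫⁻ ν, H (ν, z) ∂d)
        = S.indicator (fun _ => (1 : ℝ≥0∞)) z * ∫⁻ ν, F (g z) ν ∂d := by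
      intro z
      have hfz : Measurable fun ν : N => F (g z) ν :=
        hF.comp (measurable_const.prodMk measurable_id)
      simp only [hHdef]
      rw [lintegral_const_mul _ hfz]
    calc ∫⁻ z, (∫⁻ ν, H (ν, z) ∂d) ∂π
        = ∫⁻ z, S.indicator (fun _ => (1 : ℝ≥0∞)) z * (∫⁻ ν, F (g z) ν ∂d) ∂π :=
          lintegral_congr h3
      _ = ∫⁻ z, S.indicator (fun z => ∫⁻ ν, F (g z) ν ∂d) z ∂π := by
          refine lintegral_congr fun z => ?_
          by_cases h : z ∈ S
          · simp [Set.indicator_of_mem, h]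
          · simp [Set.indicator_of_notMem, h]
      _ = ∫⁻ z in S, (∫⁻ ν, F (g z) ν ∂d) ∂π := lintegral_indicator hS _
  exact hLHS.trans hRHS.symm

/-- Extension of a finite tuple to an infinite sequence using a default value. -/
def extFin {N : Type*} (ν₀ : N) (t : ℕ) (z : Fin t → N) : ℕ → N :=
  fun i => if h : i < t then z ⟨i, h⟩ else ν₀

lemma measurable_extFin {N : Type*} [MeasurableSpace N] (ν₀ : N) (t : ℕ) :
    Measurable (extFin ν₀ t) := by
  apply measurable_pi_lambda
  intro i
  by_cases h : i < t
  · simp only [extFin, dif_pos h]; exact measurable_pi_apply _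
  · simp only [extFin, dif_neg h]; exact measurable_const

lemma measurable_traj {X U N : Type*} [MeasurableSpace X] [MeasurableSpace U]
    [MeasurableSpace N] {f : X → U → N → X} {π : X → U}
    (hf : Measurable fun q : X × U × N => f q.1 q.2.1 q.2.2) (hπ : Measurable π)
    (x₀ : X) (t : ℕ) : Measurable fun ω : ℕ → N => traj f π x₀ ω t := by
  induction t with
  | zero => exact measurable_const
  | succ t ih =>
    have : (fun ω : ℕ → N => traj f π x₀ ω (t + 1))
        = (fun q : X × U × N => f q.1 q.2.1 q.2.2) ∘
          fun ω : ℕ → N => (traj f π x₀ ω t, π (traj f π x₀ ω t), ω t) := rfl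
    rw [this]
    exact hf.comp (ih.prodMk ((hπ.comp ih).prodMk (measurable_pi_apply t)))

lemma traj_congr {X U N : Type*} (f : X → U → N → X) (π : X → U) (x₀ : X)
    (t : ℕ) (ω ω' : ℕ → N) (h : ∀ i, i < t → ω i = ω' i) :
    traj f π x₀ ω t = traj f π x₀ ω' t := by
  induction t with
  | zero => rfl
  | succ t ih =>
    show f _ _ _ = f _ _ _
    rw [ih fun i hi => h i (Nat.lt_succ_of_lt hi), h t (Nat.lt_succ_self t)]

/-- Quantitative reachability bound: under a ranking supermartingale with
decrease `ε`, the probability that the trajectory has not reached `X_s` by time `t ≥ 1`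
is at most `V(x₀)/(ε·t)`. -/
theorem rsm_reachability_bound
    {n m p : ℕ} (X : Set (L1 n)) (U : Set (L1 m)) (N : Set (L1 p))
    (hX : IsCompact X)
    (f : X → U → N → X) (π : X → U)
    (hfmeas : Measurable fun q : X × U × N => f q.1 q.2.1 q.2.2)
    (hπmeas : Measurable π)
    (d : Measure N) [IsProbabilityMeasure d]
    -- `μ` is the infinite product measure `d^ℕ` on `N^ℕ`, characterized on cylinders:
    (μ : Measure (ℕ → N)) [IsProbabilityMeasure μ]
    (hμ : ∀ (s : Finset ℕ) (B : ℕ → Set N), (∀ i, MeasurableSet (B i)) →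
      μ {ω | ∀ i ∈ s, ω i ∈ B i} = ∏ i ∈ s, d (B i))
    (Xs : Set (L1 n)) (hXsMeas : MeasurableSet Xs)
    (V : X → ℝ) (hVnonneg : ∀ x, 0 ≤ V x) (hVcont : Continuous V)
    (ε : ℝ) (hε : 0 < ε)
    (hdec : ∀ x : X, (x : L1 n) ∉ Xs → ∫ ω, V (f x (π x) ω) ∂d ≤ V x - ε)
    (x₀ : X) :
    ∀ t : ℕ, 1 ≤ t →
      (μ {ω : ℕ → N | ∀ s ≤ t, ((traj f π x₀ ω s : X) : L1 n) ∉ Xs}).toReal ≤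
        V x₀ / (ε * t) := by
  classical
  have hXcs : CompactSpace X := isCompact_iff_compactSpace.mp hX
  -- N is nonempty since it carries a probability measure
  have hNne : Nonempty N := by
    by_contra h
    rw [not_nonempty_iff] at h
    have h1 : d Set.univ = 1 := measure_univ
    rw [Set.univ_eq_empty_iff.mpr h, measure_empty] at h1
    exact zero_ne_one h1
  obtain ⟨ν₀⟩ := hNne
  -- a uniform bound on V
  obtain ⟨xC, -, hxC⟩ :=
    isCompact_univ.exists_isMaxOn ⟨x₀, Set.mem_univ _⟩ hVcont.continuousOn
  have hCb : ∀ x : X, V x ≤ V xC := fun x => hxC (Set.mem_univ x)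
  have hVmeas : Measurable V := hVcont.measurable
  -- the "not yet reached" events
  set A : ℕ → Set (ℕ → N) :=
    fun k => {ω | ∀ s ≤ k, ((traj f π x₀ ω s : X) : L1 n) ∉ Xs} with hAdef
  have hAmono : ∀ k, A (k + 1) ⊆ A k := by
    intro k ω hω s hs
    exact hω s (hs.trans (Nat.le_succ k))
  -- the lintegral form of the decrease condition
  have hdec' : ∀ x : X, (x : L1 n) ∉ Xs →
      (∫⁻ ν, ENNReal.ofReal (V (f x (π x) ν)) ∂d) + ENNReal.ofReal ε
        ≤ ENNReal.ofReal (V x) := by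
    intro x hx
    have hmeasx : Measurable fun ν : N => V (f x (π x) ν) :=
      hVmeas.comp (hfmeas.comp
        (measurable_const.prodMk (measurable_const.prodMk measurable_id)))
    have hint : Integrable (fun ν : N => V (f x (π x) ν)) d := by
      refine ⟨hmeasx.aestronglyMeasurable, ?_⟩
      apply HasFiniteIntegral.of_bounded (C := V xC)
      filter_upwards with ν
      rw [Real.norm_eq_abs, abs_of_nonneg (hVnonneg _)]
      exact hCb _
    rw [← ofReal_integral_eq_lintegral_ofReal hint (ae_of_all _ fun ν => hVnonneg _),
      ← ENNReal.ofReal_add (integral_nonneg fun ν => hVnonneg _) hε.le]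
    exact ENNReal.ofReal_le_ofReal (by linarith [hdec x hx])
  -- the one-step supermartingale estimate
  have hstep : ∀ k : ℕ,
      (∫⁻ ω in A (k + 1), ENNReal.ofReal (V (traj f π x₀ ω (k + 1))) ∂μ)
          + ENNReal.ofReal ε * μ (A (k + 1))
        ≤ ∫⁻ ω in A k, ENNReal.ofReal (V (traj f π x₀ ω k)) ∂μ := by
    intro k
    -- express the event and the state as functions of the first k coordinates
    set g : (Fin k → N) → X := fun z => traj f π x₀ (extFin ν₀ k z) k with hgdef
    have hg : Measurable g :=
      (measurable_traj hfmeas hπmeas x₀ k).comp (measurable_extFin ν₀ k)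
    have hgr : ∀ ω : ℕ → N, ∀ s ≤ k,
        traj f π x₀ (extFin ν₀ k (fun i : Fin k => ω i)) s = traj f π x₀ ω s := by
      intro ω s hs
      refine traj_congr f π x₀ s _ _ fun i hi => ?_
      have hik : i < k := lt_of_lt_of_le hi hs
      simp [extFin, hik]
    set S : Set (Fin k → N) :=
      {z | ∀ s ≤ k, ((traj f π x₀ (extFin ν₀ k z) s : X) : L1 n) ∉ Xs} with hSdef
    have hSmeas : MeasurableSet S := by
      have : S = ⋂ s ∈ Finset.range (k + 1),
          (fun z : Fin k → N =>
            ((traj f π x₀ (extFin ν₀ k z) s : X) : L1 n)) ⁻¹' Xsᶜ := by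
        ext z
        simp only [hSdef, Set.mem_setOf_eq, Set.mem_iInter, Set.mem_preimage,
          Set.mem_compl_iff, Finset.mem_range, Nat.lt_succ_iff]
      rw [this]
      refine MeasurableSet.biInter (Finset.range (k + 1)).countable_toSet fun s _ => ?_
      exact (measurable_subtype_coe.comp
        ((measurable_traj hfmeas hπmeas x₀ s).comp (measurable_extFin ν₀ k)))
        hXsMeas.compl
    have hpre : (fun ω : ℕ → N => fun i : Fin k => ω i) ⁻¹' S = A k := by
      ext ω
      simp only [Set.mem_preimage, hSdef, Set.mem_setOf_eq, hAdef]
      constructor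
      · intro h s hs
        have := h s hs
        rwa [hgr ω s hs] at this
      · intro h s hs
        rw [hgr ω s hs]
        exact h s hs
    have hFmeas : Measurable fun q : X × N =>
        ENNReal.ofReal (V (f q.1 (π q.1) q.2)) := by
      apply ENNReal.measurable_ofReal.comp
      exact hVmeas.comp (hfmeas.comp
        (measurable_fst.prodMk ((hπmeas.comp measurable_fst).prodMk measurable_snd)))
    have KF := rsm_key_fact d μ hμ k g hg S hSmeas
      (fun x ν => ENNReal.ofReal (V (f x (π x) ν))) hFmeas
    have hgr' : ∀ ω : ℕ → N, g (fun i : Fin k => ω i) = traj f π x₀ ω k :=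
      fun ω => hgr ω k le_rfl
    simp only [hgr', hpre] at KF
    -- KF : ∫⁻ ω in A k, ofReal (V (f (x_k ω) (π (x_k ω)) (ω k))) ∂μ
    --    = ∫⁻ ω in A k, ∫⁻ ν, ofReal (V (f (x_k ω) (π (x_k ω)) ν)) ∂d ∂μ
    have hint_meas : Measurable fun ω : ℕ → N =>
        ∫⁻ ν, ENNReal.ofReal (V (f (traj f π x₀ ω k) (π (traj f π x₀ ω k)) ν)) ∂d := by
      have h1 : Measurable fun q : (ℕ → N) × N =>
          ENNReal.ofReal (V (f (traj f π x₀ q.1 k) (π (traj f π x₀ q.1 k)) q.2)) :=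
        hFmeas.comp (((measurable_traj hfmeas hπmeas x₀ k).comp measurable_fst).prodMk
          measurable_snd)
      exact h1.lintegral_prod_right'
    calc (∫⁻ ω in A (k + 1), ENNReal.ofReal (V (traj f π x₀ ω (k + 1))) ∂μ)
          + ENNReal.ofReal ε * μ (A (k + 1))
        ≤ (∫⁻ ω in A k, ENNReal.ofReal (V (traj f π x₀ ω (k + 1))) ∂μ)
          + ENNReal.ofReal ε * μ (A k) :=
          add_le_add (lintegral_mono_set (hAmono k))
            (mul_le_mul_right (measure_mono (hAmono k)) _)
      _ = (∫⁻ ω in A k,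
            (∫⁻ ν, ENNReal.ofReal
              (V (f (traj f π x₀ ω k) (π (traj f π x₀ ω k)) ν)) ∂d) ∂μ)
          + ENNReal.ofReal ε * μ (A k) := by rw [← KF]; rfl
      _ = ∫⁻ ω in A k,
            ((∫⁻ ν, ENNReal.ofReal
              (V (f (traj f π x₀ ω k) (π (traj f π x₀ ω k)) ν)) ∂d)
              + ENNReal.ofReal ε) ∂μ := by
          rw [lintegral_add_right _ measurable_const, lintegral_const,
            Measure.restrict_apply_univ]
      _ ≤ ∫⁻ ω in A k, ENNReal.ofReal (V (traj f π x₀ ω k)) ∂μ := by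
          refine setLIntegral_mono (ENNReal.measurable_ofReal.comp
            (hVmeas.comp (measurable_traj hfmeas hπmeas x₀ k))) fun ω hω => ?_
          exact hdec' (traj f π x₀ ω k) (hω k le_rfl)
  -- the main induction
  have main : ∀ k : ℕ,
      (∫⁻ ω in A k, ENNReal.ofReal (V (traj f π x₀ ω k)) ∂μ)
          + ENNReal.ofReal ε * (k : ℝ≥0∞) * μ (A k)
        ≤ ENNReal.ofReal (V x₀) := by
    intro k
    induction k with
    | zero =>
      simp only [Nat.cast_zero, mul_zero, zero_mul, add_zero]
      have h0 : (fun ω : ℕ → N => ENNReal.ofReal (V (traj f π x₀ ω 0)))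
          = fun _ => ENNReal.ofReal (V x₀) := rfl
      rw [h0, lintegral_const, Measure.restrict_apply_univ]
      exact mul_le_of_le_one_right zero_le prob_le_one
    | succ k ih =>
      have h2 : μ (A (k + 1)) ≤ μ (A k) := measure_mono (hAmono k)
      rw [show ((k + 1 : ℕ) : ℝ≥0∞) = (k : ℝ≥0∞) + 1 by push_cast; ring]
      calc (∫⁻ ω in A (k + 1), ENNReal.ofReal (V (traj f π x₀ ω (k + 1))) ∂μ)
            + ENNReal.ofReal ε * ((k : ℝ≥0∞) + 1) * μ (A (k + 1))
          = ((∫⁻ ω in A (k + 1), ENNReal.ofReal (V (traj f π x₀ ω (k + 1))) ∂μ)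
              + ENNReal.ofReal ε * μ (A (k + 1)))
            + ENNReal.ofReal ε * (k : ℝ≥0∞) * μ (A (k + 1)) := by ring
        _ ≤ (∫⁻ ω in A k, ENNReal.ofReal (V (traj f π x₀ ω k)) ∂μ)
            + ENNReal.ofReal ε * (k : ℝ≥0∞) * μ (A k) :=
            add_le_add (hstep k) (mul_le_mul_right h2 _)
        _ ≤ ENNReal.ofReal (V x₀) := ih
  -- conclusion
  intro t ht
  show (μ (A t)).toReal ≤ V x₀ / (ε * t)
  have h3 : ENNReal.ofReal ε * (t : ℝ≥0∞) * μ (A t) ≤ ENNReal.ofReal (V x₀) :=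
    le_trans (le_add_left le_rfl) (main t)
  have h3' : ENNReal.ofReal (ε * t) * μ (A t) ≤ ENNReal.ofReal (V x₀) := by
    rwa [ENNReal.ofReal_mul hε.le, ENNReal.ofReal_natCast]
  have htpos : (0 : ℝ) < t := by exact_mod_cast ht
  have hεt : (0 : ℝ) < ε * t := mul_pos hε htpos
  have h4 := ENNReal.toReal_mono ENNReal.ofReal_ne_top h3'
  rw [ENNReal.toReal_mul, ENNReal.toReal_ofReal hεt.le,
    ENNReal.toReal_ofReal (hVnonneg x₀)] at h4
  rw [le_div_iff₀ hεt]
  linarith
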